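/- For every real x > 0 there exists θ > 0 such that x·S₂(θ) − S₃(θ) > x²/2. Equivalently, the rate function J(x) := sup_{θ > 0} [ (1/2)ψ₂(θ) + x·ψ₁(θ) ] satisfies J(x) > x²/2 for every x > 0 (the quenched large deviation rate of the uniform Howitt–Warren flow strictly exceeds the annealed Gaussian rate, i.e. the model exhibits strong disorder). -/

import Mathlib

/-- `S j z = ∑_{k=0}^∞ 1/(z+k)^j`, so that `(1/2)ψ₂(θ) + xψ₁(θ) = x·S₂(θ) − S₃(θ)`. -/
noncomputable def S (j : ℕ) (z : ℝ) : ℝ := ∑' k : ℕ, 1 / (z + k) ^ j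

open Filter Topology

lemma pos_add (θ : ℝ) (hθ : 0 < θ) (k : ℕ) : 0 < θ + k := by positivity

lemma summable_term (j : ℕ) (hj : 2 ≤ j) (θ : ℝ) (hθ : 0 < θ) :
    Summable (fun k : ℕ => 1 / (θ + k) ^ j) := by
  set c := min θ 1 with hc
  have hc0 : 0 < c := lt_min hθ one_pos
  have hbase : Summable (fun k : ℕ => (1 / c ^ j) * (1 / ((k : ℝ) + 1) ^ 2)) := by
    apply Summable.mul_left
    have := (summable_nat_add_iff (f := fun n : ℕ => 1 / (n : ℝ) ^ 2) 1).mpr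
      (Real.summable_one_div_nat_pow.mpr one_lt_two)
    simpa using this
  refine Summable.of_nonneg_of_le (fun k => by positivity) (fun k => ?_) hbase
  have hk : c * ((k : ℝ) + 1) ≤ θ + k := by
    have h1 : c ≤ θ := min_le_left _ _
    have h2 : c ≤ 1 := min_le_right _ _
    nlinarith [Nat.cast_nonneg (α := ℝ) k]
  have h1 : (c * ((k : ℝ) + 1)) ^ j ≤ (θ + k) ^ j :=
    pow_le_pow_left₀ (by positivity) hk j
  have h2 : ((k : ℝ) + 1) ^ 2 ≤ ((k : ℝ) + 1) ^ j :=
    pow_le_pow_right₀ (by simp [Nat.cast_nonneg]) hj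
  have h3 : c ^ j * ((k : ℝ) + 1) ^ 2 ≤ (θ + k) ^ j := by
    rw [mul_pow] at h1
    nlinarith [pow_pos hc0 j]
  have : (1 / c ^ j) * (1 / ((k : ℝ) + 1) ^ 2) = 1 / (c ^ j * ((k : ℝ) + 1) ^ 2) := by
    rw [div_mul_div_comm]; ring_nf
  rw [this, div_le_div_iff₀ (by positivity) (by positivity)]
  calc (1:ℝ) * (c ^ j * ((k : ℝ) + 1) ^ 2) = c ^ j * ((k : ℝ) + 1) ^ 2 := by ring
    _ ≤ (θ + k) ^ j := h3
    _ = 1 * (θ + k) ^ j := by ring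

lemma S_pos (j : ℕ) (hj : 2 ≤ j) (θ : ℝ) (hθ : 0 < θ) : 0 < S j θ := by
  apply Summable.tsum_pos (summable_term j hj θ hθ) (fun k => by positivity) 0
  positivity

lemma S_shift (j : ℕ) (hj : 2 ≤ j) (θ : ℝ) (hθ : 0 < θ) :
    S j θ = 1 / θ ^ j + S j (θ + 1) := by
  rw [S, Summable.tsum_eq_zero_add (summable_term j hj θ hθ)]
  congr 1
  · norm_num
  · rw [S]; congr 1; funext k; push_cast; ring_nf

/-- Telescoping sums. -/
lemma hasSum_telescope (g : ℕ → ℝ) (hg : ∀ n, g (n + 1) ≤ g n)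
    (h0 : Tendsto g atTop (𝓝 0)) :
    HasSum (fun n => g n - g (n + 1)) (g 0) := by
  rw [hasSum_iff_tendsto_nat_of_nonneg (fun n => sub_nonneg.2 (hg n))]
  have heq : ∀ n, ∑ i ∈ Finset.range n, (g i - g (i + 1)) = g 0 - g n := by
    intro n; exact Finset.sum_range_sub' g n
  simp only [heq]
  simpa using tendsto_const_nhds.sub h0

lemma tendsto_inv_shift (y : ℝ) : Tendsto (fun k : ℕ => 1 / (y + k)) atTop (𝓝 0) := by
  have h : Tendsto (fun k : ℕ => y + (k : ℝ)) atTop atTop :=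
    tendsto_atTop_add_const_left _ _ tendsto_natCast_atTop_atTop
  simpa [one_div, Pi.inv_def] using h.inv_tendsto_atTop

lemma S2_lb (y : ℝ) (hy : 0 < y) : 1 / y + 1 / (2 * y ^ 2) ≤ S 2 y := by
  set g : ℕ → ℝ := fun k => 1 / (y + k) + 1 / (2 * (y + k) ^ 2) with hgdef
  have hpos : ∀ k : ℕ, (0:ℝ) < y + k := fun k => pos_add y hy k
  have hg : ∀ n : ℕ, g (n + 1) ≤ g n := by
    intro n
    have h1 : (0:ℝ) < y + n := hpos n
    have h2 : (0:ℝ) < y + (n + 1 : ℕ) := hpos (n + 1)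
    have hle : (y + (n:ℝ)) ≤ (y + ((n:ℕ) + 1 : ℕ)) := by push_cast; linarith
    have := one_div_le_one_div_of_le h1 hle
    have h3 : 1 / (2 * (y + ((n:ℕ) + 1 : ℕ)) ^ 2) ≤ 1 / (2 * (y + (n:ℝ)) ^ 2) := by
      apply one_div_le_one_div_of_le (by positivity)
      nlinarith
    simp only [hgdef]
    push_cast at *
    linarith
  have h0 : Tendsto g atTop (𝓝 0) := by
    have h1 := tendsto_inv_shift y
    have h2 : Tendsto (fun k : ℕ => 1 / (2 * (y + k) ^ 2)) atTop (𝓝 0) := by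
      have h4 := ((tendsto_inv_shift y).mul (tendsto_inv_shift y)).const_mul (1/2 : ℝ)
      rw [mul_zero, mul_zero] at h4
      refine h4.congr (fun k => ?_)
      have hk := (hpos k).ne'
      field_simp
    have hsum := h1.add h2
    rw [add_zero] at hsum
    exact hsum
  have hts := hasSum_telescope g hg h0
  have hg0 : g 0 = 1 / y + 1 / (2 * y ^ 2) := by simp [hgdef]
  rw [← hg0, ← hts.tsum_eq]
  apply Summable.tsum_le_tsum _ hts.summable (summable_term 2 le_rfl y hy)
  intro k
  have h1 : (0:ℝ) < y + k := hpos k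
  have h2 : (0:ℝ) < y + (k + 1 : ℕ) := hpos (k + 1)
  simp only [hgdef]
  push_cast at h2 ⊢
  rw [div_add_div _ _ (by positivity) (by positivity), div_add_div _ _ (by positivity) (by positivity),
    div_sub_div _ _ (by positivity) (by positivity), div_le_div_iff₀ (by positivity) (by positivity)]
  ring_nf
  nlinarith [sq_nonneg (y + k), hpos k, h2, sq_nonneg ((y+k)*(y+k+1))]

lemma S2_ub' (θ : ℝ) (hθ : 0 < θ) : S 2 (θ + 1) ≤ 1 / θ := by
  set g : ℕ → ℝ := fun k => 1 / (θ + k) with hgdef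
  have hpos : ∀ k : ℕ, (0:ℝ) < θ + k := fun k => pos_add θ hθ k
  have hg : ∀ n : ℕ, g (n + 1) ≤ g n := by
    intro n
    apply one_div_le_one_div_of_le (hpos n)
    push_cast; linarith
  have hts := hasSum_telescope g hg (tendsto_inv_shift θ)
  have hg0 : g 0 = 1 / θ := by simp [hgdef]
  rw [← hg0, ← hts.tsum_eq]
  apply Summable.tsum_le_tsum _ (summable_term 2 le_rfl (θ + 1) (by linarith)) hts.summable
  intro k
  have h1 : (0:ℝ) < θ + k := hpos k
  have h2 : (0:ℝ) < θ + (k + 1 : ℕ) := hpos (k + 1)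
  simp only [hgdef]
  push_cast at h2 ⊢
  rw [div_sub_div _ _ (by positivity) (by positivity), div_le_div_iff₀ (by positivity) (by positivity)]
  nlinarith

lemma S2_ub (y : ℝ) (hy : 0 < y) : S 2 y ≤ 1 / y ^ 2 + 1 / y := by
  have h := S2_ub' y hy
  rw [S_shift 2 le_rfl y hy]
  linarith

lemma S3_ub (y : ℝ) (hy : 0 < y) : S 3 y ≤ (1 / y) * S 2 y := by
  rw [S, S]
  rw [← tsum_mul_left]
  apply Summable.tsum_le_tsum _ (summable_term 3 (by norm_num) y hy)
    ((summable_term 2 le_rfl y hy).mul_left _)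
  intro k
  have h1 : (0:ℝ) < y + k := pos_add y hy k
  rw [div_mul_div_comm, one_mul, div_le_div_iff₀ (by positivity) (by positivity)]
  nlinarith [sq_nonneg (y + (k:ℝ))]

noncomputable def F (θ : ℝ) : ℝ := S 2 θ ^ 2 - 2 * S 3 θ

lemma F_step (θ : ℝ) (hθ : 0 < θ) : F (θ + 1) + 1 / (θ ^ 4 * (θ + 1) ^ 2) ≤ F θ := by
  have h2 := S_shift 2 le_rfl θ hθ
  have h3 := S_shift 3 (by norm_num) θ hθ
  have hA : 1 / (θ + 1) + 1 / (2 * (θ + 1) ^ 2) ≤ S 2 (θ + 1) := S2_lb (θ + 1) (by linarith)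
  rw [F, F, h2, h3]
  have key : 2 * (1 / (θ+1) + 1 / (2*(θ+1)^2)) / θ ^ 2 + 1 / θ ^ 4 - 2 / θ ^ 3
      = 1 / (θ ^ 4 * (θ + 1) ^ 2) := by
    field_simp
    ring
  have hmul : 2 * (1 / (θ+1) + 1 / (2*(θ+1)^2)) / θ ^ 2 ≤ 2 * S 2 (θ + 1) / θ ^ 2 := by
    gcongr
  have expand : (1 / θ ^ 2 + S 2 (θ + 1)) ^ 2 - 2 * (1 / θ ^ 3 + S 3 (θ + 1))
      - (S 2 (θ + 1) ^ 2 - 2 * S 3 (θ + 1)) = 2 * S 2 (θ + 1) / θ ^ 2 + 1 / θ ^ 4 - 2 / θ ^ 3 := by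
    field_simp
    ring
  linarith [hmul, key, expand]

lemma F_tendsto (θ : ℝ) (hθ : 0 < θ) : Tendsto (fun n : ℕ => F (θ + n)) atTop (𝓝 0) := by
  have ht := tendsto_inv_shift θ
  have h2 : Tendsto (fun n : ℕ => 1 / (θ + n) ^ 2) atTop (𝓝 0) := by
    have h := ht.mul ht
    rw [mul_zero] at h
    refine h.congr fun n => ?_
    rw [div_mul_div_comm, one_mul, ← sq]
  have h3 : Tendsto (fun n : ℕ => 1 / (θ + n) ^ 2 + 1 / (θ + n)) atTop (𝓝 0) := by
    have h := h2.add ht; rwa [add_zero] at h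
  have hup : Tendsto (fun n : ℕ => (1 / (θ + n) ^ 2 + 1 / (θ + n)) ^ 2) atTop (𝓝 0) := by
    have h := h3.mul h3
    rw [mul_zero] at h
    refine h.congr fun n => (sq _).symm
  have hlo : Tendsto (fun n : ℕ => -(2 * ((1 / (θ + n)) * (1 / (θ + n) ^ 2 + 1 / (θ + n)))))
      atTop (𝓝 0) := by
    have h := ((ht.mul h3).const_mul (2:ℝ)).neg
    rw [mul_zero, mul_zero, neg_zero] at h
    exact h
  refine tendsto_of_tendsto_of_tendsto_of_le_of_le hlo hup (fun n => ?_) (fun n => ?_)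
  · -- lower bound
    have hy : (0:ℝ) < θ + n := pos_add θ hθ n
    have hS2pos := S_pos 2 le_rfl (θ + n) hy
    have hS3 := S3_ub (θ + n) hy
    have hS2ub := S2_ub (θ + n) hy
    have hS3pos := S_pos 3 (by norm_num) (θ + n) hy
    have h1 : S 3 (θ + n) ≤ (1 / (θ + n)) * (1 / (θ + n) ^ 2 + 1 / (θ + n)) := by
      calc S 3 (θ + n) ≤ (1 / (θ + n)) * S 2 (θ + n) := hS3
        _ ≤ (1 / (θ + n)) * (1 / (θ + n) ^ 2 + 1 / (θ + n)) := by
            apply mul_le_mul_of_nonneg_left hS2ub (by positivity)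
    have hsq : (0:ℝ) ≤ S 2 (θ + n) ^ 2 := sq_nonneg _
    rw [F]; linarith
  · -- upper bound
    have hy : (0:ℝ) < θ + n := pos_add θ hθ n
    have hS2pos := S_pos 2 le_rfl (θ + n) hy
    have hS2ub := S2_ub (θ + n) hy
    have hS3pos := S_pos 3 (by norm_num) (θ + n) hy
    have h1 : S 2 (θ + n) ^ 2 ≤ (1 / (θ + n) ^ 2 + 1 / (θ + n)) ^ 2 :=
      pow_le_pow_left₀ hS2pos.le hS2ub 2
    rw [F]; linarith

lemma F_pos (θ : ℝ) (hθ : 0 < θ) : 0 < F θ := by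
  have hstep : ∀ y : ℝ, 0 < y → F (y + 1) ≤ F y := by
    intro y hy
    have h := F_step y hy
    have h2 : (0:ℝ) < 1 / (y ^ 4 * (y + 1) ^ 2) := by positivity
    linarith
  have hmono : ∀ n : ℕ, F (θ + 1 + n) ≤ F (θ + 1) := by
    intro n
    induction n with
    | zero => simp
    | succ n ih =>
      have hcast : θ + 1 + ((n : ℕ) + 1 : ℕ) = (θ + 1 + n) + 1 := by push_cast; ring
      rw [hcast]
      have hn : (0:ℝ) ≤ (n:ℝ) := Nat.cast_nonneg n
      exact le_trans (hstep _ (by linarith)) ih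
  have hlim := F_tendsto (θ + 1) (by linarith)
  have h0 : (0:ℝ) ≤ F (θ + 1) := le_of_tendsto' hlim hmono
  have h := F_step θ hθ
  have h2 : (0:ℝ) < 1 / (θ ^ 4 * (θ + 1) ^ 2) := by positivity
  linarith

lemma term_bd (c θ : ℝ) (hc : 0 < c) (h1 : c ≤ θ) (h2 : c ≤ 1) (k : ℕ) :
    1 / (θ + k) ^ 2 ≤ 1 / c ^ 2 * (1 / ((k : ℝ) + 1) ^ 2) := by
  have hk : c * ((k : ℝ) + 1) ≤ θ + k := by
    nlinarith [Nat.cast_nonneg (α := ℝ) k]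
  have hθk : (0:ℝ) < θ + k := by
    have := Nat.cast_nonneg (α := ℝ) k; linarith
  have h3 : c ^ 2 * ((k : ℝ) + 1) ^ 2 ≤ (θ + k) ^ 2 := by
    have := pow_le_pow_left₀ (by positivity) hk 2
    rwa [mul_pow] at this
  have heq : (1 / c ^ 2) * (1 / ((k : ℝ) + 1) ^ 2) = 1 / (c ^ 2 * ((k : ℝ) + 1) ^ 2) := by
    rw [div_mul_div_comm]; ring_nf
  rw [heq]
  apply one_div_le_one_div_of_le (by positivity) h3

lemma S2_contOn (a : ℝ) (ha : 0 < a) : ContinuousOn (S 2) (Set.Ici a) := by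
  have hS : S 2 = fun θ : ℝ => ∑' k : ℕ, 1 / (θ + k) ^ 2 := rfl
  rw [hS]
  set c := min a 1 with hc
  have hc0 : 0 < c := lt_min ha one_pos
  apply continuousOn_tsum (u := fun k : ℕ => 1 / c ^ 2 * (1 / ((k : ℝ) + 1) ^ 2))
  · intro k
    apply ContinuousOn.div continuousOn_const
    · fun_prop
    · intro θ hθ
      have hθa : a ≤ θ := hθ
      have : (0:ℝ) < θ + k := by have := Nat.cast_nonneg (α := ℝ) k; linarith
      positivity
  · apply Summable.mul_left
    have := (summable_nat_add_iff (f := fun n : ℕ => 1 / (n : ℝ) ^ 2) 1).mpr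
      (Real.summable_one_div_nat_pow.mpr one_lt_two)
    simpa using this
  · intro k θ hθ
    have hθa : a ≤ θ := hθ
    have hpos : (0:ℝ) < θ + k := by have := Nat.cast_nonneg (α := ℝ) k; linarith
    rw [Real.norm_eq_abs, abs_of_nonneg (by positivity)]
    exact term_bd c θ hc0 (le_trans (min_le_left _ _) hθa) (min_le_right _ _) k

/-- Strong disorder: for every `x > 0` there exists `θ > 0` with
`x·S₂(θ) − S₃(θ) > x²/2`; i.e. the quenched rate function
`J(x) = sup_{θ>0} [(1/2)ψ₂(θ) + xψ₁(θ)]` satisfies `J(x) > x²/2`. -/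
theorem strong_disorder (x : ℝ) (hx : 0 < x) :
    ∃ θ : ℝ, 0 < θ ∧ x ^ 2 / 2 < x * S 2 θ - S 3 θ := by
  set a := (max 1 x)⁻¹ with hadef
  set b := max 1 (2 / x) with hbdef
  have hmax : (0:ℝ) < max 1 x := lt_max_of_lt_left one_pos
  have ha : 0 < a := by positivity
  have ha1 : a ≤ 1 := by
    rw [hadef]
    rw [inv_le_one_iff₀]
    right; exact le_max_left _ _
  have hb1 : (1:ℝ) ≤ b := le_max_left _ _
  have hab : a ≤ b := le_trans ha1 hb1
  have hb0 : (0:ℝ) < b := by linarith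
  -- S 2 a ≥ x
  have hSa : x ≤ S 2 a := by
    have hsh := S_shift 2 le_rfl a ha
    have hpos := S_pos 2 le_rfl (a + 1) (by linarith)
    have h1 : 1 / a ^ 2 = (max 1 x) ^ 2 := by
      rw [hadef]; field_simp
    have h2 : x ≤ (max 1 x) ^ 2 := by
      rcases le_total x 1 with h | h
      · calc x ≤ 1 := h
          _ ≤ (max 1 x) ^ 2 := by nlinarith [le_max_left 1 x]
      · have : max 1 x = x := max_eq_right h
        nlinarith
    rw [hsh, h1]
    linarith
  -- S 2 b ≤ x
  have hSb : S 2 b ≤ x := by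
    have h := S2_ub b hb0
    have h1 : 1 / b ^ 2 ≤ 1 / b := by
      apply one_div_le_one_div_of_le hb0
      nlinarith
    have h2 : 2 / b ≤ x := by
      rw [div_le_iff₀ hb0]
      have : 2 / x ≤ b := le_max_right _ _
      rw [div_le_iff₀ hx] at this
      linarith
    have h3 : 1 / b + 1 / b = 2 / b := by ring
    linarith
  -- IVT
  have hcont : ContinuousOn (S 2) (Set.Icc a b) :=
    (S2_contOn a ha).mono (Set.Icc_subset_Ici_self)
  have hIVT := intermediate_value_Icc' hab hcont
  have hxmem : x ∈ Set.Icc (S 2 b) (S 2 a) := ⟨hSb, hSa⟩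
  obtain ⟨θ, hθmem, hθeq⟩ := hIVT hxmem
  refine ⟨θ, lt_of_lt_of_le ha hθmem.1, ?_⟩
  have hθ0 : 0 < θ := lt_of_lt_of_le ha hθmem.1
  have hF := F_pos θ hθ0
  rw [F, hθeq] at hF
  rw [hθeq]
  nlinarith
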